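/- Let G be a finite {C4, C5}-free simple graph, let t be an integer with 2 ≤ t ≤ 6, and let v be a vertex of degree 2t. Suppose there are 2(t−1) distinct vertices u₁, u₂, …, u_{2t−2}, all of degree 3 in G and all distinct from v, such that v u_{2i−1} u_{2i} is a triangle in G for each i ∈ {1, …, t−1}. Then the subgraph of G induced by {v, u₁, …, u_{2t−2}} is (P3+P4, 4)-reducible in G; in particular, G contains a (P3+P4, 4)-reducible induced subgraph with at most 29 vertices. -/

import Mathlib

open Finset

/-- The restriction of a graph `G` to a vertex set `A`, viewed as a graph on the same
vertex type: the edges of `G` with both endpoints in `A`. -/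
def gOn {V : Type*} (G : SimpleGraph V) (A : Set V) : SimpleGraph V where
  Adj u v := u ∈ A ∧ v ∈ A ∧ G.Adj u v
  symm := ⟨fun u v ⟨ha, hb, h⟩ => ⟨hb, ha, h.symm⟩⟩
  loopless := ⟨fun v h => G.irrefl h.2.2⟩

/-- The degree of a vertex `v` in `G`. -/
noncomputable def ndeg {V : Type*} (G : SimpleGraph V) (v : V) : ℕ :=
  {w | G.Adj v w}.ncard

/-- The degree of a vertex `v` in the subgraph of `G` induced on `A`. -/
noncomputable def degOn {V : Type*} (G : SimpleGraph V) (A : Set V) (v : V) : ℕ :=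
  {w ∈ A | G.Adj v w}.ncard

/-- The subgraph of `G` induced on `A` has a proper coloring from the lists `L`. -/
def ColorableOn {V α : Type*} (G : SimpleGraph V) (A : Set V) (L : V → Finset α) : Prop :=
  ∃ φ : V → α, (∀ v ∈ A, φ v ∈ L v) ∧ ∀ u ∈ A, ∀ w ∈ A, G.Adj u w → φ u ≠ φ w

/-- `φ` is a proper coloring of `G` with `φ v ∈ L v` for every vertex `v`. -/
def IsLColoring {V α : Type*} (G : SimpleGraph V) (L : V → Finset α) (φ : V → α) : Prop :=
  (∀ v, φ v ∈ L v) ∧ ∀ ⦃u w⦄, G.Adj u w → φ u ≠ φ w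

/-- `S` is `(P3+P4)`-independent in `H`: there is no path on 3 vertices (length 2) and
no path on 4 vertices (length 3) in `H` whose two endpoints both belong to `S`. -/
def P34Indep {V : Type*} (H : SimpleGraph V) (S : Set V) : Prop :=
  ∀ u ∈ S, ∀ v ∈ S, ∀ p : H.Walk u v, p.IsPath → p.length ≠ 2 ∧ p.length ≠ 3

/-- `G` contains no cycle of length 4 and no cycle of length 5. -/
def C45Free {V : Type*} (G : SimpleGraph V) : Prop :=
  ∀ (v : V) (c : G.Walk v v), c.IsCycle → c.length ≠ 4 ∧ c.length ≠ 5

/-- Condition (FIX) for the subgraph of `G` induced on `A`, with parameter `k`. -/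
def FIX {V : Type*} (G : SimpleGraph V) (A : Set V) (k : ℕ) : Prop :=
  ∀ v ∈ A, ∀ L : V → Finset ℕ,
    1 ≤ (L v).card →
    (∀ w ∈ A, w ≠ v → (degOn G A w : ℤ) + k - ndeg G w ≤ (L w).card) →
    ColorableOn G A L

/-- Condition (FORB) for the subgraph of `G` induced on `A`, with parameter `k`. -/
def FORB {V : Type*} (G : SimpleGraph V) (A : Set V) (k : ℕ) : Prop :=
  ∀ S : Set V, S ⊆ A → P34Indep (gOn G A) S → S.ncard ≤ k - 2 →
    ∀ L : V → Finset ℕ,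
      (∀ w ∈ A,
        (degOn G A w : ℤ) + k - ndeg G w - S.indicator (fun _ => (1 : ℤ)) w ≤ (L w).card) →
      ColorableOn G A L

/-- The subgraph of `G` induced on `A` is `(P3+P4, k)`-reducible in `G`. -/
def Reducible {V : Type*} (G : SimpleGraph V) (A : Set V) (k : ℕ) : Prop :=
  FIX G A k ∧ FORB G A k

/-- `G` with the list assignment `L` is weighted `ε`-flexible. -/
def WeightedFlexible {V α : Type*} [Fintype V] (G : SimpleGraph V)
    (L : V → Finset α) (ε : ℝ) : Prop :=
  ∀ w : V → α → ℝ, (∀ v, ∀ c ∈ L v, 0 ≤ w v c) →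
    ∃ φ : V → α, IsLColoring G L φ ∧
      ε * (∑ v, ∑ c ∈ L v, w v c) ≤ ∑ v, w v (φ v)

lemma greedy_colorable {V : Type} [Fintype V] (G : SimpleGraph V) (A : Set V)
    (L : V → Finset ℕ) (f : V → ℕ) (hf : Function.Injective f)
    (h : ∀ w ∈ A, ({x ∈ A | G.Adj w x ∧ f x < f w}).ncard < (L w).card) :
    ColorableOn G A L := by
  classical
  suffices H : ∀ n, ∃ φ : V → ℕ, (∀ x ∈ A, f x < n → φ x ∈ L x) ∧
      (∀ x ∈ A, f x < n → ∀ y ∈ A, f y < n → G.Adj x y → φ x ≠ φ y) by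
    obtain ⟨φ, h1, h2⟩ := H ((Finset.univ.sup f) + 1)
    have hb : ∀ x : V, f x < (Finset.univ.sup f) + 1 := fun x =>
      Nat.lt_succ_of_le (Finset.le_sup (Finset.mem_univ x))
    exact ⟨φ, fun x hx => h1 x hx (hb x), fun x hx y hy => h2 x hx (hb x) y hy (hb y)⟩
  intro n
  induction n with
  | zero => exact ⟨fun _ => 0, fun x _ hx => absurd hx (Nat.not_lt_zero _),
      fun x _ hx => absurd hx (Nat.not_lt_zero _)⟩
  | succ n ih =>
    obtain ⟨φ, h1, h2⟩ := ih
    by_cases hx : ∃ x ∈ A, f x = n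
    · obtain ⟨x, hxA, hfx⟩ := hx
      have huniq : ∀ y, f y = n → y = x := fun y hy => hf (hy.trans hfx.symm)
      set S : Set V := {y ∈ A | G.Adj x y ∧ f y < f x} with hS
      have hSfin : S.Finite := Set.toFinite _
      have hcard : (hSfin.toFinset.image φ).card < (L x).card := by
        calc (hSfin.toFinset.image φ).card ≤ hSfin.toFinset.card := Finset.card_image_le
        _ = S.ncard := (Set.ncard_eq_toFinset_card S hSfin).symm
        _ < (L x).card := h x hxA
      have : ¬ (L x ⊆ hSfin.toFinset.image φ) := fun hsub =>
        absurd (Finset.card_le_card hsub) (Nat.not_le_of_lt hcard)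
      obtain ⟨c, hcL, hcnot⟩ := Finset.not_subset.mp this
      refine ⟨Function.update φ x c, ?_, ?_⟩
      · intro y hyA hylt
        by_cases hyx : y = x
        · rw [hyx, Function.update_self]; exact hcL
        · have : f y < n := lt_of_le_of_ne (Nat.lt_succ_iff.mp hylt) (fun h => hyx (huniq y h))
          simpa [Function.update_of_ne hyx] using h1 y hyA this
      · intro a haA halt b hbA hblt hadj
        by_cases hax : a = x <;> by_cases hbx : b = x
        · subst hax; subst hbx; exact absurd hadj G.irrefl
        · subst hax
          have hbn : f b < n := lt_of_le_of_ne (Nat.lt_succ_iff.mp hblt) (fun h => hbx (huniq b h))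
          have hbS : b ∈ S := ⟨hbA, hadj, hfx ▸ hbn⟩
          have : φ b ∈ hSfin.toFinset.image φ :=
            Finset.mem_image_of_mem φ (hSfin.mem_toFinset.mpr hbS)
          simp only [Function.update_self, Function.update_of_ne hbx]
          exact fun hcb => hcnot (hcb ▸ this)
        · subst hbx
          have han : f a < n := lt_of_le_of_ne (Nat.lt_succ_iff.mp halt) (fun h => hax (huniq a h))
          have haS : a ∈ S := ⟨haA, hadj.symm, hfx ▸ han⟩
          have : φ a ∈ hSfin.toFinset.image φ :=
            Finset.mem_image_of_mem φ (hSfin.mem_toFinset.mpr haS)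
          simp only [Function.update_self, Function.update_of_ne hax]
          exact fun hca => hcnot (hca ▸ this)
        · have han : f a < n := lt_of_le_of_ne (Nat.lt_succ_iff.mp halt) (fun h => hax (huniq a h))
          have hbn : f b < n := lt_of_le_of_ne (Nat.lt_succ_iff.mp hblt) (fun h => hbx (huniq b h))
          simpa [Function.update_of_ne hax, Function.update_of_ne hbx] using h2 a haA han b hbA hbn hadj
    · refine ⟨φ, ?_, ?_⟩
      · intro y hyA hylt
        exact h1 y hyA (lt_of_le_of_ne (Nat.lt_succ_iff.mp hylt) (fun h => hx ⟨y, hyA, h⟩))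
      · intro a haA halt b hbA hblt hadj
        exact h2 a haA (lt_of_le_of_ne (Nat.lt_succ_iff.mp halt) (fun h => hx ⟨a, haA, h⟩))
          b hbA (lt_of_le_of_ne (Nat.lt_succ_iff.mp hblt) (fun h => hx ⟨b, hbA, h⟩)) hadj

lemma book_colorable {V : Type} [Fintype V] (G : SimpleGraph V) (A : Set V)
    (v d : V) (L : V → Finset ℕ)
    (hLd : 1 ≤ (L d).card)
    (hLv : d ≠ v → 2 ≤ (L v).card)
    (hLw : ∀ w ∈ A, w ≠ v → w ≠ d → degOn G A w < (L w).card) :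
    ColorableOn G A L := by
  classical
  let e : V ↪ ℕ := (Fintype.equivFin V).toEmbedding.trans Fin.valEmbedding
  set f : V → ℕ := fun x => if x = d then 0 else if x = v then 1 else e x + 2 with hfdef
  have hfd : f d = 0 := by simp [hfdef]
  have hf : Function.Injective f := by
    intro a b hab
    simp only [hfdef] at hab
    split_ifs at hab <;>
      first
        | omega
        | (subst_vars; rfl)
        | exact e.injective (by omega)
  apply greedy_colorable G A L f hf
  intro w hw
  by_cases hwd : w = d
  · have he : {x ∈ A | G.Adj w x ∧ f x < f w} = ∅ := by
      ext x
      simp only [Set.mem_setOf_eq, Set.mem_empty_iff_false, iff_false, not_and]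
      intro _ _
      rw [hwd, hfd]
      omega
    rw [he, Set.ncard_empty]
    rw [hwd]; exact lt_of_lt_of_le Nat.one_pos hLd
  · by_cases hwv : w = v
    · have hdv : d ≠ v := fun h => hwd (hwv.trans h.symm)
      have hfw : f w = 1 := by simp [hfdef, hwd, hwv, hdv.symm]
      have hsub : {x ∈ A | G.Adj w x ∧ f x < f w} ⊆ {d} := by
        rintro x ⟨-, -, hlt⟩
        rw [Set.mem_singleton_iff]
        by_contra hxd
        rw [hfw] at hlt
        by_cases hxv : x = v
        · have : f x = 1 := by simp [hfdef, hxd, hxv, hdv.symm]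
          omega
        · have : f x = e x + 2 := by simp [hfdef, hxd, hxv]
          omega
      calc ({x ∈ A | G.Adj w x ∧ f x < f w}).ncard ≤ ({d} : Set V).ncard :=
            Set.ncard_le_ncard hsub (Set.toFinite _)
        _ = 1 := Set.ncard_singleton d
        _ < (L w).card := by rw [hwv]; exact hLv hdv
    · have hsub : {x ∈ A | G.Adj w x ∧ f x < f w} ⊆ {x ∈ A | G.Adj w x} :=
        fun x ⟨h1, h2, _⟩ => ⟨h1, h2⟩
      calc ({x ∈ A | G.Adj w x ∧ f x < f w}).ncard ≤ degOn G A w :=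
            Set.ncard_le_ncard hsub (Set.toFinite _)
        _ < (L w).card := hLw w hw hwv hwd

/-- (Lemma 4(3).) In a `{C4, C5}`-free graph, if a vertex `v` of degree `2t`
(`2 ≤ t ≤ 6`) lies on `t-1` triangles `v (p i) (q i)` whose other `2(t-1)` vertices are
pairwise distinct, distinct from `v`, and all of degree 3, then the induced subgraph on
`{v} ∪ range p ∪ range q` is `(P3+P4, 4)`-reducible in `G`; in particular `G` contains a
`(P3+P4, 4)`-reducible induced subgraph on at most 29 vertices. -/
theorem reducible_worst_faces {V : Type} [Fintype V] (G : SimpleGraph V) (hfree : C45Free G)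
    (t : ℕ) (ht2 : 2 ≤ t) (ht6 : t ≤ 6)
    (v : V) (hdv : ndeg G v = 2 * t)
    (p q : Fin (t - 1) → V)
    (hinj : Function.Injective (Sum.elim p q : Fin (t - 1) ⊕ Fin (t - 1) → V))
    (hpv : ∀ i, p i ≠ v) (hqv : ∀ i, q i ≠ v)
    (hdp : ∀ i, ndeg G (p i) = 3) (hdq : ∀ i, ndeg G (q i) = 3)
    (htri : ∀ i, G.Adj v (p i) ∧ G.Adj (p i) (q i) ∧ G.Adj (q i) v) :
    Reducible G ({v} ∪ Set.range p ∪ Set.range q) 4 ∧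
      ∃ A : Set V, A.Nonempty ∧ A.ncard ≤ 29 ∧ Reducible G A 4 := by
  classical
  set A : Set V := {v} ∪ Set.range p ∪ Set.range q with hA
  have hvA : v ∈ A := Set.mem_union_left _ (Set.mem_union_left _ rfl)
  have hpA : ∀ i, p i ∈ A := fun i => Set.mem_union_left _ (Set.mem_union_right _ ⟨i, rfl⟩)
  have hqA : ∀ i, q i ∈ A := fun i => Set.mem_union_right _ ⟨i, rfl⟩
  have hpq : ∀ i j, p i ≠ q j := by
    intro i j h
    have : (Sum.inl i : Fin (t-1) ⊕ Fin (t-1)) = Sum.inr j := hinj (by simpa using h)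
    simp at this
  -- degree of v inside A
  have hdegv : 2 * t ≤ degOn G A v + 2 := by
    have hsub : Set.range (Sum.elim p q) ⊆ {w ∈ A | G.Adj v w} := by
      rintro x ⟨i, rfl⟩
      cases i with
      | inl i => exact ⟨hpA i, (htri i).1⟩
      | inr i => exact ⟨hqA i, (htri i).2.2.symm⟩
    have hr : (Set.range (Sum.elim p q)).ncard = (t - 1) + (t - 1) := by
      rw [← Nat.card_coe_set_eq, Nat.card_range_of_injective hinj]
      simp [Nat.card_eq_fintype_card]
    have hle : (t - 1) + (t - 1) ≤ degOn G A v := by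
      rw [← hr]
      exact Set.ncard_le_ncard hsub (Set.toFinite _)
    omega
  -- degrees of p i, q i inside A
  have hdegp : ∀ i, 2 ≤ degOn G A (p i) := by
    intro i
    have hsub : ({v, q i} : Set V) ⊆ {w ∈ A | G.Adj (p i) w} := by
      rintro x (rfl | rfl)
      · exact ⟨hvA, (htri i).1.symm⟩
      · exact ⟨hqA i, (htri i).2.1⟩
    have h2 : ({v, q i} : Set V).ncard = 2 := Set.ncard_pair (fun h => hqv i h.symm)
    rw [← h2]
    exact Set.ncard_le_ncard hsub (Set.toFinite _)
  have hdegq : ∀ i, 2 ≤ degOn G A (q i) := by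
    intro i
    have hsub : ({v, p i} : Set V) ⊆ {w ∈ A | G.Adj (q i) w} := by
      rintro x (rfl | rfl)
      · exact ⟨hvA, (htri i).2.2⟩
      · exact ⟨hpA i, (htri i).2.1.symm⟩
    have h2 : ({v, p i} : Set V).ncard = 2 := Set.ncard_pair (fun h => hpv i h.symm)
    rw [← h2]
    exact Set.ncard_le_ncard hsub (Set.toFinite _)
  have ndegA : ∀ w ∈ A, w ≠ v → ndeg G w = 3 ∧ 2 ≤ degOn G A w := by
    intro w hw hwv
    rcases hw with ((h | ⟨i, rfl⟩) | ⟨i, rfl⟩)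
    · exact absurd h hwv
    · exact ⟨hdp i, hdegp i⟩
    · exact ⟨hdq i, hdegq i⟩
  -- FIX
  have hFIX : FIX G A 4 := by
    intro v0 hv0 L hL1 hL2
    refine book_colorable G A v v0 L hL1 ?_ ?_
    · intro hne
      have h := hL2 v hvA (Ne.symm hne)
      rw [hdv] at h
      omega
    · intro w hwA hwv hwd
      obtain ⟨h3, _⟩ := ndegA w hwA hwv
      have h := hL2 w hwA hwd
      rw [h3] at h
      omega
  -- FORB
  have hFORB : FORB G A 4 := by
    intro S hSA hSind hScard L hL
    have key : ∀ a ∈ A, ∀ b ∈ A, a ≠ b →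
        ∃ m, m ≠ a ∧ m ≠ b ∧ (gOn G A).Adj a m ∧ (gOn G A).Adj m b := by
      have adjpv : ∀ i, (gOn G A).Adj (p i) v := fun i => ⟨hpA i, hvA, (htri i).1.symm⟩
      have adjqv : ∀ i, (gOn G A).Adj (q i) v := fun i => ⟨hqA i, hvA, (htri i).2.2⟩
      have adjpq : ∀ i, (gOn G A).Adj (p i) (q i) := fun i => ⟨hpA i, hqA i, (htri i).2.1⟩
      have hvp : ∀ i, v ≠ p i := fun i h => hpv i h.symm
      have hvq : ∀ i, v ≠ q i := fun i h => hqv i h.symm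
      have hqp : ∀ i j, q i ≠ p j := fun i j h => hpq j i h.symm
      intro a ha b hb hab
      rcases ha with ((ha | ⟨i, rfl⟩) | ⟨i, rfl⟩)
      · rw [Set.mem_singleton_iff] at ha
        subst ha
        rcases hb with ((hb | ⟨j, rfl⟩) | ⟨j, rfl⟩)
        · rw [Set.mem_singleton_iff] at hb
          exact absurd hb.symm hab
        · exact ⟨q j, hqv j, hqp j j, (adjqv j).symm, (adjpq j).symm⟩
        · exact ⟨p j, hpv j, hpq j j, (adjpv j).symm, adjpq j⟩
      · rcases hb with ((hb | ⟨j, rfl⟩) | ⟨j, rfl⟩)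
        · rw [Set.mem_singleton_iff] at hb
          subst hb
          exact ⟨q i, hqp i i, hqv i, adjpq i, adjqv i⟩
        · exact ⟨v, hvp i, hvp j, adjpv i, (adjpv j).symm⟩
        · exact ⟨v, hvp i, hvq j, adjpv i, (adjqv j).symm⟩
      · rcases hb with ((hb | ⟨j, rfl⟩) | ⟨j, rfl⟩)
        · rw [Set.mem_singleton_iff] at hb
          subst hb
          exact ⟨p i, hpq i i, hpv i, (adjpq i).symm, adjpv i⟩
        · exact ⟨v, hvq i, hvp j, adjqv i, (adjpv j).symm⟩
        · exact ⟨v, hvq i, hvq j, adjqv i, (adjqv j).symm⟩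
    have hsub : S.Subsingleton := by
      intro a ha b hb
      by_contra hab
      obtain ⟨m, hma, hmb, h1, h2⟩ := key a (hSA ha) b (hSA hb) hab
      set wlk : (gOn G A).Walk a b :=
        SimpleGraph.Walk.cons h1 (SimpleGraph.Walk.cons h2 SimpleGraph.Walk.nil) with hwlk
      have hpath : wlk.IsPath := by
        rw [SimpleGraph.Walk.isPath_def]
        have hs : wlk.support = [a, m, b] := by simp [hwlk]
        rw [hs]
        simp only [List.nodup_cons, List.mem_cons, List.mem_singleton, List.nodup_nil,
          List.not_mem_nil, or_false, not_or, and_true]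
        exact ⟨⟨fun h => hma h.symm, hab⟩, hmb, not_false⟩
      exact (hSind a ha b hb wlk hpath).1 (by simp [hwlk])
    rcases hsub.eq_empty_or_singleton with hSe | ⟨d, hSd⟩
    · refine book_colorable G A v v L ?_ ?_ ?_
      · have h := hL v hvA
        rw [hdv, hSe, Set.indicator_empty] at h
        simp only [Pi.zero_apply, sub_zero] at h
        omega
      · exact fun h => absurd rfl h
      · intro w hwA hwv hwd
        obtain ⟨h3, _⟩ := ndegA w hwA hwv
        have h := hL w hwA
        rw [h3, hSe, Set.indicator_empty] at h
        simp only [Pi.zero_apply, sub_zero] at h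
        omega
    · have hdS : d ∈ S := by rw [hSd]; rfl
      have hdA : d ∈ A := hSA hdS
      refine book_colorable G A v d L ?_ ?_ ?_
      · have h := hL d hdA
        have hind : S.indicator (fun _ => (1:ℤ)) d = 1 := by
          rw [Set.indicator_of_mem hdS]
        rw [hind] at h
        by_cases hdv' : d = v
        · rw [hdv', hdv] at h
          rw [hdv']
          omega
        · obtain ⟨h3, h2⟩ := ndegA d hdA hdv'
          rw [h3] at h
          omega
      · intro hne
        have h := hL v hvA
        have hind : S.indicator (fun _ => (1:ℤ)) v = 0 := by
          rw [Set.indicator_of_notMem (by rw [hSd]; exact fun h => hne (Set.mem_singleton_iff.mp h).symm)]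
        rw [hdv, hind] at h
        omega
      · intro w hwA hwv hwd
        obtain ⟨h3, _⟩ := ndegA w hwA hwv
        have h := hL w hwA
        have hind : S.indicator (fun _ => (1:ℤ)) w = 0 := by
          rw [Set.indicator_of_notMem (by rw [hSd]; exact hwd)]
        rw [h3, hind] at h
        omega
  refine ⟨⟨hFIX, hFORB⟩, A, ⟨v, hvA⟩, ?_, hFIX, hFORB⟩
  have h1 : (Set.range p).ncard ≤ t - 1 := by
    rw [← Set.image_univ]
    calc (p '' Set.univ).ncard ≤ (Set.univ : Set (Fin (t-1))).ncard :=
          Set.ncard_image_le (Set.toFinite _)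
      _ = t - 1 := by rw [Set.ncard_univ]; simp [Nat.card_eq_fintype_card]
  have h2 : (Set.range q).ncard ≤ t - 1 := by
    rw [← Set.image_univ]
    calc (q '' Set.univ).ncard ≤ (Set.univ : Set (Fin (t-1))).ncard :=
          Set.ncard_image_le (Set.toFinite _)
      _ = t - 1 := by rw [Set.ncard_univ]; simp [Nat.card_eq_fintype_card]
  have h3 : A.ncard ≤ ({v} : Set V).ncard + (Set.range p).ncard + (Set.range q).ncard := by
    rw [hA]
    calc ({v} ∪ Set.range p ∪ Set.range q : Set V).ncard
        ≤ ({v} ∪ Set.range p : Set V).ncard + (Set.range q).ncard :=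
          Set.ncard_union_le _ _
      _ ≤ (({v} : Set V).ncard + (Set.range p).ncard) + (Set.range q).ncard := by
          exact Nat.add_le_add_right (Set.ncard_union_le _ _) _
  rw [Set.ncard_singleton] at h3
  omega
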